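/- Let a < b, α, β ∈ (0,1), μ ∈ ℂ, and let f, g : [a,b] → ℝ be continuously differentiable functions whose left and right Riemann–Liouville derivatives of orders α and β exist and are continuous on (a,b), with all relevant products integrable. If f(a) = f(b) = 0 (or g(a) = g(b) = 0), then ∫_a^b (D^{α,β}_μ f)(t)·g(t) dt = −∫_a^b f(t)·(D^{β,α}_{−μ} g)(t) dt. -/

import Mathlib

open MeasureTheory intervalIntegral Set

/-- Left Riemann–Liouville derivative of order `α ∈ (0,1)` of a complex-valued function:
`(ₐD_t^α x)(t) = (1/Γ(1−α)) (d/dt) ∫_a^t (t−s)^(−α) x(s) ds`. -/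
noncomputable def RLlC (a α : ℝ) (x : ℝ → ℂ) (t : ℝ) : ℂ :=
  (Real.Gamma (1 - α))⁻¹ • deriv (fun τ => ∫ s in a..τ, ((τ - s) ^ (-α) : ℝ) • x s) t

/-- Right Riemann–Liouville derivative of order `α ∈ (0,1)` of a complex-valued function:
`(ₜD_b^α x)(t) = −(1/Γ(1−α)) (d/dt) ∫_t^b (s−t)^(−α) x(s) ds`. -/
noncomputable def RLrC (b α : ℝ) (x : ℝ → ℂ) (t : ℝ) : ℂ :=
  -((Real.Gamma (1 - α))⁻¹ • deriv (fun τ => ∫ s in τ..b, ((s - τ) ^ (-α) : ℝ) • x s) t)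

/-- The fractional operator of order `(α,β)` with parameter `μ`:
`D^{α,β}_μ x = (1/2)(ₐD_t^α x − ₜD_b^β x) + (iμ/2)(ₐD_t^α x + ₜD_b^β x)`. -/
noncomputable def Dfrac (a b α β : ℝ) (μ : ℂ) (x : ℝ → ℂ) : ℝ → ℂ := fun t =>
  (1 / 2 : ℂ) * (RLlC a α x t - RLrC b β x t)
    + Complex.I * μ / 2 * (RLlC a α x t + RLrC b β x t)

/-- Existence of the left RL derivative of order `α` and of the right RL derivative of
order `β` on `(a,b)`. -/
def HasRLpair (a b α β : ℝ) (x : ℝ → ℂ) : Prop :=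
  (∀ t ∈ Set.Ioo a b,
    DifferentiableAt ℝ (fun τ => ∫ s in a..τ, ((τ - s) ^ (-α) : ℝ) • x s) t) ∧
  (∀ t ∈ Set.Ioo a b,
    DifferentiableAt ℝ (fun τ => ∫ s in τ..b, ((s - τ) ^ (-β) : ℝ) • x s) t)

/-- The fractional operator applied componentwise to a real vector-valued function. -/
noncomputable def DfracV {d : ℕ} (a b α β : ℝ) (μ : ℂ) (x : ℝ → Fin d → ℝ)
    (t : ℝ) (i : Fin d) : ℂ :=
  Dfrac a b α β μ (fun s => ((x s i : ℝ) : ℂ)) t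

noncomputable def Kl (a γ : ℝ) (p : ℝ → ℝ) (t : ℝ) : ℝ := ∫ s in a..t, (t - s) ^ (-γ) * p s
noncomputable def Kr (b γ : ℝ) (q : ℝ → ℝ) (t : ℝ) : ℝ := ∫ s in t..b, (s - t) ^ (-γ) * q s

lemma Kl_sub (a γ : ℝ) (p : ℝ → ℝ) (t : ℝ) :
    Kl a γ p t = ∫ u in (0:ℝ)..(t - a), u ^ (-γ) * p (t - u) := by
  have := intervalIntegral.integral_comp_sub_left (a := a) (b := t)
    (fun u => u ^ (-γ) * p (t - u)) t
  simp only [sub_self] at this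
  rw [Kl, ← this]
  apply intervalIntegral.integral_congr
  intro s _
  simp

lemma Kr_sub (b γ : ℝ) (q : ℝ → ℝ) (t : ℝ) :
    Kr b γ q t = ∫ u in (0:ℝ)..(b - t), u ^ (-γ) * q (t + u) := by
  have := intervalIntegral.integral_comp_sub_right (a := t) (b := b)
    (fun u => u ^ (-γ) * q (t + u)) t
  simp only [sub_self] at this
  rw [Kr, ← this]
  apply intervalIntegral.integral_congr
  intro s _
  simp [add_sub_cancel]

lemma ker_intable {γ : ℝ} (hγ : γ < 1) (c d : ℝ) :
    IntervalIntegrable (fun u : ℝ => u ^ (-γ)) volume c d :=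
  intervalIntegral.intervalIntegrable_rpow' (by linarith)

lemma ker_sub_intable {γ : ℝ} (hγ : γ < 1) (t c d : ℝ) :
    IntervalIntegrable (fun s : ℝ => (t - s) ^ (-γ)) volume c d := by
  have := (ker_intable hγ (t - c) (t - d)).comp_sub_left t
  simpa using this

lemma ker_sub_intable' {γ : ℝ} (hγ : γ < 1) (t c d : ℝ) :
    IntervalIntegrable (fun s : ℝ => (s - t) ^ (-γ)) volume c d := by
  have := (ker_intable hγ (c - t) (d - t)).comp_sub_right t
  simpa using this

lemma ker_mul_intable {γ : ℝ} (hγ : γ < 1) {p : ℝ → ℝ} (hp : Continuous p) (t c d : ℝ) :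
    IntervalIntegrable (fun s : ℝ => (t - s) ^ (-γ) * p s) volume c d :=
  (ker_sub_intable hγ t c d).mul_continuousOn hp.continuousOn

lemma ker_mul_intable' {γ : ℝ} (hγ : γ < 1) {p : ℝ → ℝ} (hp : Continuous p) (t c d : ℝ) :
    IntervalIntegrable (fun s : ℝ => (s - t) ^ (-γ) * p s) volume c d :=
  (ker_sub_intable' hγ t c d).mul_continuousOn hp.continuousOn

lemma ker_integral {γ : ℝ} (hγ : γ < 1) {c d : ℝ} :
    ∫ u in c..d, u ^ (-γ) = (d ^ (1 - γ) - c ^ (1 - γ)) / (1 - γ) := by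
  rw [integral_rpow (Or.inl (by linarith))]
  norm_num [sub_eq_add_neg, add_comm]

lemma ker_int_eval {γ : ℝ} (hγ : γ < 1) {c t : ℝ} :
    ∫ s in c..t, (t - s) ^ (-γ) = ((t - c) ^ (1 - γ) - 0 ^ (1-γ)) / (1 - γ) := by
  have h1 := intervalIntegral.integral_comp_sub_left (a := c) (b := t)
    (fun u : ℝ => u ^ (-γ)) t
  simp only [sub_self] at h1
  rw [h1, ker_integral hγ]

lemma ker_int_eval' {γ : ℝ} (hγ : γ < 1) {c d t : ℝ} :
    ∫ s in c..d, (t - s) ^ (-γ) = ((t - c) ^ (1 - γ) - (t - d) ^ (1-γ)) / (1 - γ) := by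
  have h1 := intervalIntegral.integral_comp_sub_left (a := c) (b := d)
    (fun u : ℝ => u ^ (-γ)) t
  rw [h1, ker_integral hγ]

lemma Kl_est {a γ : ℝ} (hγ0 : 0 < γ) (hγ : γ < 1) {p : ℝ → ℝ} (hp : Continuous p)
    {t₁ t₂ M : ℝ} (h1 : a ≤ t₁) (h2 : t₁ ≤ t₂) (hM : ∀ s ∈ Icc a t₂, |p s| ≤ M) :
    |Kl a γ p t₂ - Kl a γ p t₁| ≤ 2 * M * (t₂ - t₁) ^ (1 - γ) / (1 - γ) := by
  have hM0 : 0 ≤ M := le_trans (abs_nonneg _) (hM a ⟨le_refl _, le_trans h1 h2⟩)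
  have hsplit : Kl a γ p t₂ = (∫ s in a..t₁, (t₂ - s) ^ (-γ) * p s)
      + ∫ s in t₁..t₂, (t₂ - s) ^ (-γ) * p s :=
    (intervalIntegral.integral_add_adjacent_intervals
      (ker_mul_intable hγ hp t₂ a t₁) (ker_mul_intable hγ hp t₂ t₁ t₂)).symm
  have e1 : (∫ s in a..t₁, ((t₂ - s) ^ (-γ) - (t₁ - s) ^ (-γ)) * p s)
      = (∫ s in a..t₁, (t₂ - s) ^ (-γ) * p s) - ∫ s in a..t₁, (t₁ - s) ^ (-γ) * p s := by
    rw [← intervalIntegral.integral_sub (ker_mul_intable hγ hp t₂ a t₁)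
      (ker_mul_intable hγ hp t₁ a t₁)]
    exact intervalIntegral.integral_congr (fun s _ => by ring)
  have hdiff : Kl a γ p t₂ - Kl a γ p t₁ =
      (∫ s in a..t₁, ((t₂ - s) ^ (-γ) - (t₁ - s) ^ (-γ)) * p s)
      + ∫ s in t₁..t₂, (t₂ - s) ^ (-γ) * p s := by
    rw [hsplit, e1, Kl]; ring
  set C := M * (t₂ - t₁) ^ (1 - γ) / (1 - γ) with hC
  have h1γ : (0:ℝ) < 1 - γ := by linarith
  have hCnn : 0 ≤ C := by
    apply div_nonneg _ h1γ.le
    exact mul_nonneg hM0 (Real.rpow_nonneg (by linarith) _)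
  have hb2 : |∫ s in t₁..t₂, (t₂ - s) ^ (-γ) * p s| ≤ C := by
    have hbd : ∀ s ∈ Set.uIoc t₁ t₂, ‖(t₂ - s) ^ (-γ) * p s‖ ≤ (t₂ - s) ^ (-γ) * M := by
      intro s hs
      rw [Set.uIoc_of_le h2] at hs
      have h0 : (0:ℝ) ≤ (t₂ - s) ^ (-γ) := Real.rpow_nonneg (by linarith [hs.2]) _
      rw [norm_mul, Real.norm_eq_abs, Real.norm_eq_abs,
        abs_of_nonneg h0]
      exact mul_le_mul_of_nonneg_left (hM s ⟨le_trans h1 hs.1.le, hs.2⟩) h0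
    have := intervalIntegral.norm_integral_le_abs_of_norm_le (g := fun s => (t₂ - s) ^ (-γ) * M)
      (μ := volume) ((MeasureTheory.ae_restrict_iff' measurableSet_uIoc).mpr
        (Filter.Eventually.of_forall hbd))
      ((ker_sub_intable hγ t₂ t₁ t₂).mul_const M)
    rw [Real.norm_eq_abs] at this
    refine le_trans this ?_
    rw [intervalIntegral.integral_mul_const, ker_int_eval hγ,
      Real.zero_rpow (by linarith)]
    have hx : (0:ℝ) ≤ (t₂ - t₁) ^ (1 - γ) := Real.rpow_nonneg (by linarith) _
    have hnn : (0:ℝ) ≤ ((t₂ - t₁) ^ (1 - γ) - 0) / (1 - γ) * M :=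
      mul_nonneg (div_nonneg (by linarith) h1γ.le) hM0
    rw [abs_of_nonneg hnn, hC]; exact le_of_eq (by ring)
  have hne : ∀ᵐ s : ℝ ∂(volume.restrict (Set.uIoc a t₁)), s ≠ t₁ := by
    refine MeasureTheory.ae_restrict_of_ae ?_
    have h0 : (volume : Measure ℝ) {t₁} = 0 := Real.volume_singleton
    exact MeasureTheory.compl_mem_ae_iff.mpr h0
  have hmem : ∀ᵐ s : ℝ ∂(volume.restrict (Set.uIoc a t₁)), s ∈ Set.uIoc a t₁ :=
    MeasureTheory.ae_restrict_mem measurableSet_uIoc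
  have hb1 : |∫ s in a..t₁, ((t₂ - s) ^ (-γ) - (t₁ - s) ^ (-γ)) * p s| ≤ C := by
    have hbd : ∀ᵐ s ∂(volume.restrict (Set.uIoc a t₁)),
        ‖((t₂ - s) ^ (-γ) - (t₁ - s) ^ (-γ)) * p s‖
          ≤ ((t₁ - s) ^ (-γ) - (t₂ - s) ^ (-γ)) * M := by
      filter_upwards [hne, hmem] with s hsne hs
      rw [Set.uIoc_of_le h1] at hs
      have hs1 : (0:ℝ) < t₁ - s := by
        rcases lt_or_eq_of_le hs.2 with h | h
        · linarith
        · exact absurd h hsne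
      have hmono : (t₂ - s) ^ (-γ) ≤ (t₁ - s) ^ (-γ) :=
        Real.rpow_le_rpow_of_nonpos hs1 (by linarith) (by linarith)
      rw [norm_mul, Real.norm_eq_abs, Real.norm_eq_abs,
        abs_of_nonpos (by linarith), neg_sub]
      exact mul_le_mul_of_nonneg_left (hM s ⟨hs.1.le, by linarith [hs.2]⟩)
        (by linarith)
    have hgint : IntervalIntegrable
        (fun s => ((t₁ - s) ^ (-γ) - (t₂ - s) ^ (-γ)) * M) volume a t₁ :=
      ((ker_sub_intable hγ t₁ a t₁).sub (ker_sub_intable hγ t₂ a t₁)).mul_const M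
    have hle := intervalIntegral.norm_integral_le_abs_of_norm_le (μ := volume) hbd hgint
    rw [Real.norm_eq_abs] at hle
    refine le_trans hle ?_
    have hval : (∫ s in a..t₁, ((t₁ - s) ^ (-γ) - (t₂ - s) ^ (-γ)) * M)
        = (((t₁ - a) ^ (1 - γ) - 0 ^ (1 - γ)) / (1 - γ)
          - ((t₂ - a) ^ (1 - γ) - (t₂ - t₁) ^ (1 - γ)) / (1 - γ)) * M := by
      rw [intervalIntegral.integral_mul_const,
        intervalIntegral.integral_sub (ker_sub_intable hγ t₁ a t₁)
          (ker_sub_intable hγ t₂ a t₁), ker_int_eval hγ, ker_int_eval' hγ]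
    rw [hval]
    have hXnn : (0:ℝ) ≤ ∫ s in a..t₁, ((t₁ - s) ^ (-γ) - (t₂ - s) ^ (-γ)) * M := by
      apply intervalIntegral.integral_nonneg_of_ae_restrict h1
      have hne' : ∀ᵐ s : ℝ ∂(volume.restrict (Set.Icc a t₁)), s ≠ t₁ := by
        refine MeasureTheory.ae_restrict_of_ae ?_
        have h0 : (volume : Measure ℝ) {t₁} = 0 := Real.volume_singleton
        exact MeasureTheory.compl_mem_ae_iff.mpr h0
      have hmem' : ∀ᵐ s : ℝ ∂(volume.restrict (Set.Icc a t₁)), s ∈ Set.Icc a t₁ :=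
        MeasureTheory.ae_restrict_mem measurableSet_Icc
      filter_upwards [hne', hmem'] with s hsne hs
      have hs1 : (0:ℝ) < t₁ - s := by
        rcases lt_or_eq_of_le hs.2 with h | h
        · linarith
        · exact absurd h hsne
      have hmono : (t₂ - s) ^ (-γ) ≤ (t₁ - s) ^ (-γ) :=
        Real.rpow_le_rpow_of_nonpos hs1 (by linarith) (by linarith)
      exact mul_nonneg (by linarith) hM0
    rw [hval] at hXnn
    rw [abs_of_nonneg hXnn]
    have hmono2 : (t₁ - a) ^ (1 - γ) ≤ (t₂ - a) ^ (1 - γ) :=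
      Real.rpow_le_rpow (by linarith) (by linarith) (by linarith)
    rw [Real.zero_rpow (by linarith : 1 - γ ≠ 0), hC]
    calc (((t₁ - a) ^ (1 - γ) - 0) / (1 - γ)
          - ((t₂ - a) ^ (1 - γ) - (t₂ - t₁) ^ (1 - γ)) / (1 - γ)) * M
        = ((t₁ - a) ^ (1 - γ) - (t₂ - a) ^ (1 - γ) + (t₂ - t₁) ^ (1 - γ)) * M / (1 - γ) := by
          ring
      _ ≤ (t₂ - t₁) ^ (1 - γ) * M / (1 - γ) := by gcongr; linarith
      _ = M * (t₂ - t₁) ^ (1 - γ) / (1 - γ) := by ring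
  calc |Kl a γ p t₂ - Kl a γ p t₁| ≤ C + C := by
        rw [hdiff]; exact le_trans (abs_add_le _ _) (add_le_add hb1 hb2)
    _ = 2 * M * (t₂ - t₁) ^ (1 - γ) / (1 - γ) := by rw [hC]; ring

lemma Kl_cont {a b γ : ℝ} (hγ0 : 0 < γ) (hγ : γ < 1) {p : ℝ → ℝ} (hp : Continuous p) :
    ContinuousOn (Kl a γ p) (Icc a b) := by
  obtain ⟨C, hC⟩ := isCompact_Icc.exists_bound_of_continuousOn
    (hp.continuousOn : ContinuousOn p (Icc a b))
  set M := max C 0 with hMdef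
  have hM : ∀ s ∈ Icc a b, |p s| ≤ M := fun s hs =>
    le_trans (hC s hs) (le_max_left _ _)
  have key : ∀ t₁ ∈ Icc a b, ∀ t₂ ∈ Icc a b,
      |Kl a γ p t₂ - Kl a γ p t₁| ≤ 2 * M * |t₂ - t₁| ^ (1 - γ) / (1 - γ) := by
    intro t₁ h₁ t₂ h₂
    rcases le_total t₁ t₂ with h | h
    · rw [abs_of_nonneg (by linarith : (0:ℝ) ≤ t₂ - t₁)]
      exact Kl_est hγ0 hγ hp h₁.1 h
        (fun s hs => hM s ⟨hs.1, le_trans hs.2 h₂.2⟩)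
    · rw [abs_sub_comm, abs_of_nonpos (by linarith : t₂ - t₁ ≤ 0), neg_sub]
      exact Kl_est hγ0 hγ hp h₂.1 h
        (fun s hs => hM s ⟨hs.1, le_trans hs.2 h₁.2⟩)
  intro t₀ ht₀
  rw [ContinuousWithinAt, tendsto_iff_dist_tendsto_zero]
  have habs : Filter.Tendsto (fun t : ℝ => |t - t₀|) (nhdsWithin t₀ (Icc a b)) (nhds 0) := by
    have : Filter.Tendsto (fun t : ℝ => |t - t₀|) (nhds t₀) (nhds 0) := by
      have := ((continuous_id.sub continuous_const).abs :
        Continuous fun t : ℝ => |t - t₀|).tendsto t₀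
      simpa using this
    exact this.mono_left nhdsWithin_le_nhds
  have hrpow : Filter.Tendsto (fun t : ℝ => |t - t₀| ^ (1 - γ))
      (nhdsWithin t₀ (Icc a b)) (nhds 0) := by
    have hc : ContinuousAt (fun x : ℝ => x ^ (1 - γ)) 0 :=
      Real.continuousAt_rpow_const 0 _ (Or.inr (by linarith))
    have := hc.tendsto.comp habs
    simpa [Function.comp_def, Real.zero_rpow (by linarith : 1 - γ ≠ 0)] using this
  have hlim : Filter.Tendsto (fun t : ℝ => 2 * M * |t - t₀| ^ (1 - γ) / (1 - γ))
      (nhdsWithin t₀ (Icc a b)) (nhds 0) := by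
    have := (hrpow.const_mul (2 * M)).div_const (1 - γ)
    simpa using this
  apply squeeze_zero' (Filter.Eventually.of_forall (fun t => dist_nonneg))
    ?_ hlim
  apply Filter.eventually_of_mem self_mem_nhdsWithin
  intro t ht
  rw [Real.dist_eq]
  exact key t₀ ht₀ t ht

lemma Kr_eq_Kl {a b γ : ℝ} (q : ℝ → ℝ) (t : ℝ) :
    Kr b γ q t = Kl a γ (fun x => q (a + b - x)) (a + b - t) := by
  have h := intervalIntegral.integral_comp_sub_left (a := t) (b := b)
    (fun x => (a + b - t - x) ^ (-γ) * q (a + b - x)) (a + b)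
  have h2 : a + b - b = a := by ring
  rw [h2] at h
  rw [Kr, Kl, ← h]
  apply intervalIntegral.integral_congr
  intro s _
  show (s - t) ^ (-γ) * q s = (a + b - t - (a + b - s)) ^ (-γ) * q (a + b - (a + b - s))
  have h3 : a + b - t - (a + b - s) = s - t := by ring
  have h4 : a + b - (a + b - s) = s := by ring
  rw [h3, h4]

lemma Kr_cont {a b γ : ℝ} (hγ0 : 0 < γ) (hγ : γ < 1) {q : ℝ → ℝ} (hq : Continuous q) :
    ContinuousOn (Kr b γ q) (Icc a b) := by
  have h1 : ContinuousOn (Kl a γ (fun x => q (a + b - x))) (Icc a b) :=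
    Kl_cont hγ0 hγ (hq.comp (continuous_const.sub continuous_id))
  have h2 : ContinuousOn (fun t : ℝ => a + b - t) (Icc a b) :=
    (continuous_const.sub continuous_id).continuousOn
  have h3 : Set.MapsTo (fun t : ℝ => a + b - t) (Icc a b) (Icc a b) := by
    intro t ht
    exact ⟨by simp only [Set.mem_Icc] at ht ⊢; linarith [ht.2],
      by simp only [Set.mem_Icc] at ht ⊢; linarith [ht.1]⟩
  have := h1.comp h2 h3
  apply ContinuousOn.congr this
  intro t _
  exact Kr_eq_Kl q t

lemma rpow_meas (γ : ℝ) : Measurable (fun x : ℝ => x ^ (-γ)) :=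
  measurable_of_continuousOn_compl_singleton 0 (fun x hx =>
    (Real.continuousAt_rpow_const x _ (Or.inl hx)).continuousWithinAt)

lemma shift_FTC {a b u : ℝ} (hu : 0 < u) (hub : u ≤ b - a)
    {p q p' q' : ℝ → ℝ} (hp : Continuous p) (hq : Continuous q)
    (hp' : Continuous p') (hq' : Continuous q')
    (hdp : ∀ t ∈ Set.Ioo a b, HasDerivAt p (p' t) t)
    (hdq : ∀ t ∈ Set.Ioo a b, HasDerivAt q (q' t) t) :
    ∫ x in a..(b - u), (p' x * q (x + u) + p x * q' (x + u))
      = p (b - u) * q b - p a * q (a + u) := by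
  have hle : a ≤ b - u := by linarith
  have h := intervalIntegral.integral_eq_sub_of_hasDerivAt_of_le hle
    (f := fun x => p x * q (x + u))
    (f' := fun x => p' x * q (x + u) + p x * q' (x + u))
    ((hp.mul (hq.comp (continuous_id.add continuous_const))).continuousOn)
    (fun x hx => by
      have h1 : HasDerivAt p (p' x) x := hdp x ⟨hx.1, by linarith [hx.2]⟩
      have h2 : HasDerivAt (fun y => q (y + u)) (q' (x + u)) x := by
        have := (hdq (x + u) ⟨by linarith [hx.1], by linarith [hx.2]⟩).comp x
          ((hasDerivAt_id x).add_const u)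
        simpa [Function.comp_def] using this
      exact h1.mul h2)
    (((hp'.mul (hq.comp (continuous_id.add continuous_const))).add
      (hp.mul (hq'.comp (continuous_id.add continuous_const)))).intervalIntegrable a (b - u))
  rw [h]
  have h2 : b - u + u = b := by ring
  rw [h2]

lemma T1 {a b γ : ℝ} (hab : a < b) (hγ0 : 0 < γ) (hγ : γ < 1)
    {p r : ℝ → ℝ} (hp : Continuous p) (hr : Continuous r) :
    ∫ t in a..b, (Kl a γ p t) * r t
      = ∫ u in Set.Ioc (0:ℝ) (b - a), u ^ (-γ) * ∫ x in a..(b - u), p x * r (x + u) := by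
  classical
  set W : ℝ × ℝ → ℝ := fun z =>
    if z.2 ≤ z.1 - a then z.2 ^ (-γ) * p (z.1 - z.2) * r z.1 else 0 with hW
  have hWmeas : Measurable W := by
    apply Measurable.ite
    · exact measurableSet_le measurable_snd (measurable_fst.sub measurable_const)
    · exact (((rpow_meas γ).comp measurable_snd).mul
        ((hp.comp (continuous_fst.sub continuous_snd)).measurable)).mul
        ((hr.comp continuous_fst).measurable)
    · exact measurable_const
  -- bounds
  obtain ⟨Mp, hMp⟩ := isCompact_Icc.exists_bound_of_continuousOn
    (hp.continuousOn : ContinuousOn p (Icc a b))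
  obtain ⟨Mr, hMr⟩ := isCompact_Icc.exists_bound_of_continuousOn
    (hr.continuousOn : ContinuousOn r (Icc a b))
  set M : ℝ := (max Mp 0) * (max Mr 0) with hMdef
  have hM0 : 0 ≤ M := mul_nonneg (le_max_right _ _) (le_max_right _ _)
  haveI : IsFiniteMeasure (volume.restrict (Set.Ioc a b)) :=
    ⟨by rw [Measure.restrict_apply_univ]; exact measure_Ioc_lt_top⟩
  have hker : IntegrableOn (fun u : ℝ => u ^ (-γ)) (Set.Ioc 0 (b - a)) volume :=
    (intervalIntegrable_iff_integrableOn_Ioc_of_le (by linarith)).mp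
      (ker_intable hγ 0 (b - a))
  have hBint : Integrable (fun z : ℝ × ℝ => M * z.2 ^ (-γ))
      ((volume.restrict (Set.Ioc a b)).prod (volume.restrict (Set.Ioc 0 (b - a)))) := by
    have := MeasureTheory.Integrable.mul_prod (L := ℝ)
      (f := fun _ : ℝ => M) (g := fun u : ℝ => u ^ (-γ))
      (integrable_const M : Integrable _ (volume.restrict (Set.Ioc a b))) hker
    simpa using this
  have hWint : Integrable W
      ((volume.restrict (Set.Ioc a b)).prod (volume.restrict (Set.Ioc 0 (b - a)))) := by
    apply hBint.mono' hWmeas.aestronglyMeasurable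
    have hrect : ∀ᵐ z : ℝ × ℝ
        ∂((volume.restrict (Set.Ioc a b)).prod (volume.restrict (Set.Ioc 0 (b - a)))),
        z ∈ (Set.Ioc a b) ×ˢ (Set.Ioc 0 (b - a)) := by
      rw [Measure.prod_restrict]
      exact MeasureTheory.ae_restrict_mem (measurableSet_Ioc.prod measurableSet_Ioc)
    filter_upwards [hrect] with z hz
    obtain ⟨hz1, hz2⟩ := hz
    have hu0 : (0:ℝ) < z.2 := hz2.1
    have hknn : (0:ℝ) ≤ z.2 ^ (-γ) := Real.rpow_nonneg hu0.le _
    rw [hW]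
    by_cases hcase : z.2 ≤ z.1 - a
    · simp only [if_pos hcase, Real.norm_eq_abs, abs_mul]
      rw [abs_of_nonneg hknn]
      have hbp : |p (z.1 - z.2)| ≤ max Mp 0 :=
        le_trans (hMp (z.1 - z.2) ⟨by linarith, by linarith [hz1.2]⟩) (le_max_left _ _)
      have hbr : |r z.1| ≤ max Mr 0 :=
        le_trans (hMr z.1 ⟨hz1.1.le, hz1.2⟩) (le_max_left _ _)
      calc z.2 ^ (-γ) * |p (z.1 - z.2)| * |r z.1|
          ≤ (z.2 ^ (-γ) * max Mp 0) * max Mr 0 := by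
            apply mul_le_mul (mul_le_mul_of_nonneg_left hbp hknn) hbr (abs_nonneg _)
            exact mul_nonneg hknn (le_max_right _ _)
        _ = M * z.2 ^ (-γ) := by rw [hMdef]; ring
    · simp only [if_neg hcase, norm_zero]
      positivity
  -- step 1 : rewrite LHS as iterated integral
  have hstep1 : ∫ t in a..b, (Kl a γ p t) * r t
      = ∫ t in Set.Ioc a b, ∫ u in Set.Ioc (0:ℝ) (b - a), W (t, u) := by
    rw [intervalIntegral.integral_of_le hab.le]
    apply MeasureTheory.setIntegral_congr_fun measurableSet_Ioc
    intro t ht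
    have h1 : ∀ u : ℝ, W (t, u)
        = Set.indicator (Set.Iic (t - a)) (fun u => u ^ (-γ) * p (t - u) * r t) u := by
      intro u
      show (if u ≤ t - a then u ^ (-γ) * p (t - u) * r t else 0) = _
      rw [Set.indicator_apply]
      simp only [Set.mem_Iic]
    show Kl a γ p t * r t = ∫ u in Set.Ioc (0:ℝ) (b - a), W (t, u)
    rw [MeasureTheory.setIntegral_congr_fun measurableSet_Ioc
      (fun u _ => h1 u), MeasureTheory.setIntegral_indicator measurableSet_Iic]
    have h2 : Set.Ioc (0:ℝ) (b - a) ∩ Set.Iic (t - a) = Set.Ioc (0:ℝ) (t - a) := by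
      rw [Set.Ioc_inter_Iic, min_eq_right (by linarith [ht.2] : t - a ≤ b - a)]
    rw [h2]
    have h3 : Kl a γ p t = ∫ u in Set.Ioc (0:ℝ) (t - a), u ^ (-γ) * p (t - u) := by
      rw [Kl_sub, intervalIntegral.integral_of_le (by linarith [ht.1])]
    rw [h3, ← MeasureTheory.integral_mul_const]
  rw [hstep1]
  have hswap := MeasureTheory.integral_integral_swap
    (f := fun t u => W (t, u))
    (μ := volume.restrict (Set.Ioc a b)) (ν := volume.restrict (Set.Ioc (0:ℝ) (b - a)))
    hWint
  rw [hswap]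
  -- step 4 : inner integral evaluation
  apply MeasureTheory.setIntegral_congr_fun measurableSet_Ioc
  intro u hu
  show (∫ t in Set.Ioc a b, W (t, u)) = u ^ (-γ) * ∫ x in a..(b - u), p x * r (x + u)
  have h1 : ∀ t : ℝ, W (t, u)
      = Set.indicator (Set.Ici (a + u)) (fun t => u ^ (-γ) * p (t - u) * r t) t := by
    intro t
    show (if u ≤ t - a then u ^ (-γ) * p (t - u) * r t else 0) = _
    rw [Set.indicator_apply]
    exact if_congr (by rw [Set.mem_Ici]; constructor <;> intro h <;> linarith) rfl rfl
  rw [MeasureTheory.setIntegral_congr_fun measurableSet_Ioc (fun t _ => h1 t),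
    MeasureTheory.setIntegral_indicator measurableSet_Ici]
  have h2 : Set.Ioc a b ∩ Set.Ici (a + u) = Set.Icc (a + u) b := by
    ext x
    simp only [Set.mem_inter_iff, Set.mem_Ioc, Set.mem_Ici, Set.mem_Icc]
    constructor
    · rintro ⟨⟨_, hx2⟩, hx3⟩; exact ⟨hx3, hx2⟩
    · rintro ⟨hx1, hx2⟩; exact ⟨⟨by linarith [hu.1], hx2⟩, hx1⟩
  rw [h2, MeasureTheory.integral_Icc_eq_integral_Ioc,
    ← intervalIntegral.integral_of_le (by linarith [hu.2] : a + u ≤ b)]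
  have h3 : ∫ t in (a + u)..b, u ^ (-γ) * p (t - u) * r t
      = u ^ (-γ) * ∫ t in (a + u)..b, p (t - u) * r t := by
    rw [← intervalIntegral.integral_const_mul]
    apply intervalIntegral.integral_congr
    intro t _
    ring
  rw [h3]
  congr 1
  have h4 := intervalIntegral.integral_comp_sub_right (a := a + u) (b := b)
    (fun x => p x * r (x + u)) u
  have h5 : a + u - u = a := by ring
  rw [h5] at h4
  rw [← h4]
  apply intervalIntegral.integral_congr
  intro t _
  show p (t - u) * r t = p (t - u) * r (t - u + u)
  rw [sub_add_cancel]

lemma outer_integrable {γ c : ℝ} {F : ℝ → ℝ} (hγ : γ < 1) (hF : Continuous F) :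
    IntegrableOn (fun u : ℝ => u ^ (-γ) * F u) (Set.Ioc (0:ℝ) c) volume := by
  obtain ⟨C, hC⟩ := isCompact_Icc.exists_bound_of_continuousOn
    (hF.continuousOn : ContinuousOn F (Icc 0 c))
  have hker : IntegrableOn (fun u : ℝ => u ^ (-γ)) (Set.Ioc 0 c) volume := by
    rcases le_total (0:ℝ) c with h | h
    · exact (intervalIntegrable_iff_integrableOn_Ioc_of_le h).mp (ker_intable hγ 0 c)
    · rw [Set.Ioc_eq_empty (not_lt.mpr h)]
      exact integrableOn_empty
  apply (hker.const_mul (max C 0)).mono'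
    (((rpow_meas γ).mul hF.measurable).aestronglyMeasurable)
  filter_upwards [MeasureTheory.ae_restrict_mem measurableSet_Ioc] with u hu
  have hknn : (0:ℝ) ≤ u ^ (-γ) := Real.rpow_nonneg hu.1.le _
  rw [Real.norm_eq_abs]
  show |u ^ (-γ) * F u| ≤ _
  rw [abs_mul, abs_of_nonneg hknn]
  have hb : |F u| ≤ max C 0 := le_trans (hC u ⟨hu.1.le, hu.2⟩) (le_max_left _ _)
  calc u ^ (-γ) * |F u| ≤ u ^ (-γ) * max C 0 := mul_le_mul_of_nonneg_left hb hknn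
    _ = max C 0 * u ^ (-γ) := by ring

lemma partC {a b γ : ℝ} (hab : a < b) (hγ0 : 0 < γ) (hγ : γ < 1)
    {p q p' q' : ℝ → ℝ} (hp : Continuous p) (hq : Continuous q)
    (hp' : Continuous p') (hq' : Continuous q')
    (hdp : ∀ t ∈ Set.Ioo a b, HasDerivAt p (p' t) t)
    (hdq : ∀ t ∈ Set.Ioo a b, HasDerivAt q (q' t) t) :
    ∫ t in a..b, (Kl a γ p t * q' t + p' t * Kr b γ q t)
      = q b * Kl a γ p b - p a * Kr b γ q a := by
  have huIcc : Set.uIcc a b = Set.Icc a b := Set.uIcc_of_le hab.le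
  have hint1 : IntervalIntegrable (fun t => Kl a γ p t * q' t) volume a b := by
    apply ContinuousOn.intervalIntegrable
    rw [huIcc]
    exact (Kl_cont hγ0 hγ hp).mul hq'.continuousOn
  have hint2 : IntervalIntegrable (fun t => p' t * Kr b γ q t) volume a b := by
    apply ContinuousOn.intervalIntegrable
    rw [huIcc]
    exact hp'.continuousOn.mul (Kr_cont hγ0 hγ hq)
  rw [intervalIntegral.integral_add hint1 hint2]
  -- Term 1
  have hT1 := T1 hab hγ0 hγ hp hq'
  -- Term 2 via reflection
  set qr : ℝ → ℝ := fun x => q (a + b - x) with hqr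
  set pr' : ℝ → ℝ := fun x => p' (a + b - x) with hpr'
  have hqrc : Continuous qr := hq.comp (continuous_const.sub continuous_id)
  have hpr'c : Continuous pr' := hp'.comp (continuous_const.sub continuous_id)
  have hT2 : ∫ t in a..b, p' t * Kr b γ q t = ∫ t in a..b, Kl a γ qr t * pr' t := by
    have h := intervalIntegral.integral_comp_sub_left (a := a) (b := b)
      (fun x => Kl a γ qr x * pr' x) (a + b)
    have e1 : a + b - b = a := by ring
    have e2 : a + b - a = b := by ring
    rw [e1, e2] at h
    rw [← h]
    apply intervalIntegral.integral_congr
    intro t _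
    show p' t * Kr b γ q t = Kl a γ qr (a + b - t) * pr' (a + b - t)
    simp only [hpr', hqr]
    rw [Kr_eq_Kl (a := a) q t]
    have e3 : a + b - (a + b - t) = t := by ring
    rw [e3, mul_comm]
  have hT2' := T1 hab hγ0 hγ hqrc hpr'c
  -- rewrite inner integral of T2' by reflection
  have hT2'' : ∫ t in a..b, p' t * Kr b γ q t
      = ∫ u in Set.Ioc (0:ℝ) (b - a), u ^ (-γ) * ∫ x in a..(b - u), p' x * q (x + u) := by
    rw [hT2, hT2']
    apply MeasureTheory.setIntegral_congr_fun measurableSet_Ioc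
    intro u _
    show u ^ (-γ) * (∫ x in a..(b - u), qr x * pr' (x + u))
      = u ^ (-γ) * ∫ x in a..(b - u), p' x * q (x + u)
    congr 1
    have h := intervalIntegral.integral_comp_sub_left (a := a) (b := b - u)
      (fun y => p' y * q (y + u)) (a + b - u)
    have e1 : a + b - u - (b - u) = a := by ring
    have e2 : a + b - u - a = b - u := by ring
    rw [e1, e2] at h
    rw [← h]
    apply intervalIntegral.integral_congr
    intro x _
    show qr x * pr' (x + u) = p' (a + b - u - x) * q (a + b - u - x + u)
    simp only [hqr, hpr']
    have e3 : a + b - u - x + u = a + b - x := by ring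
    have e4 : a + b - (x + u) = a + b - u - x := by ring
    rw [e3, e4, mul_comm]
  rw [hT1, hT2'']
  -- combine the two u-integrals
  have hcont1 : Continuous fun u : ℝ => ∫ x in a..(b - u), p x * q' (x + u) := by
    apply continuous_parametric_intervalIntegral_of_continuous
      (f := fun (u : ℝ) (x : ℝ) => p x * q' (x + u))
    · exact ((hp.comp continuous_snd).mul (hq'.comp (continuous_snd.add continuous_fst)))
    · exact continuous_const.sub continuous_id
  have hcont2 : Continuous fun u : ℝ => ∫ x in a..(b - u), p' x * q (x + u) := by
    apply continuous_parametric_intervalIntegral_of_continuous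
      (f := fun (u : ℝ) (x : ℝ) => p' x * q (x + u))
    · exact ((hp'.comp continuous_snd).mul (hq.comp (continuous_snd.add continuous_fst)))
    · exact continuous_const.sub continuous_id
  rw [← MeasureTheory.integral_add (outer_integrable hγ hcont1) (outer_integrable hγ hcont2)]
  -- evaluate pointwise with FTC
  have hval : ∀ u ∈ Set.Ioc (0:ℝ) (b - a),
      (u ^ (-γ) * ∫ x in a..(b - u), p x * q' (x + u))
        + u ^ (-γ) * ∫ x in a..(b - u), p' x * q (x + u)
      = u ^ (-γ) * (p (b - u) * q b - p a * q (a + u)) := by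
    intro u hu
    have i1 : IntervalIntegrable (fun x : ℝ => p x * q' (x + u)) volume a (b - u) :=
      Continuous.intervalIntegrable (by fun_prop) _ _
    have i2 : IntervalIntegrable (fun x : ℝ => p' x * q (x + u)) volume a (b - u) :=
      Continuous.intervalIntegrable (by fun_prop) _ _
    rw [← mul_add, ← intervalIntegral.integral_add i1 i2]
    congr 1
    rw [← shift_FTC hu.1 hu.2 hp hq hp' hq' hdp hdq]
    apply intervalIntegral.integral_congr
    intro x _
    ring
  rw [MeasureTheory.setIntegral_congr_fun measurableSet_Ioc hval]
  -- final evaluation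
  have hsplit : ∫ u in Set.Ioc (0:ℝ) (b - a), u ^ (-γ) * (p (b - u) * q b - p a * q (a + u))
      = q b * (∫ u in Set.Ioc (0:ℝ) (b - a), u ^ (-γ) * p (b - u))
        - p a * ∫ u in Set.Ioc (0:ℝ) (b - a), u ^ (-γ) * q (a + u) := by
    rw [← MeasureTheory.integral_const_mul, ← MeasureTheory.integral_const_mul,
      ← MeasureTheory.integral_sub]
    · apply MeasureTheory.setIntegral_congr_fun measurableSet_Ioc
      intro u _
      show u ^ (-γ) * (p (b - u) * q b - p a * q (a + u)) = _
      ring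
    · exact (outer_integrable hγ (hp.comp (continuous_const.sub continuous_id))).const_mul _
    · exact (outer_integrable hγ (hq.comp (continuous_const.add continuous_id))).const_mul _
  rw [hsplit]
  congr 2
  · rw [Kl_sub, intervalIntegral.integral_of_le (by linarith : (0:ℝ) ≤ b - a)]
  · rw [Kr_sub, intervalIntegral.integral_of_le (by linarith : (0:ℝ) ≤ b - a)]

lemma ofReal_Kl {a γ : ℝ} (xt : ℝ → ℝ) (τ : ℝ) :
    (∫ s in a..τ, ((τ - s) ^ (-γ) : ℝ) • ((xt s : ℝ) : ℂ)) = ((Kl a γ xt τ : ℝ) : ℂ) := by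
  rw [Kl, ← intervalIntegral.integral_ofReal]
  apply intervalIntegral.integral_congr
  intro s _
  simp [Complex.real_smul]

lemma ofReal_Kr {b γ : ℝ} (xt : ℝ → ℝ) (τ : ℝ) :
    (∫ s in τ..b, ((s - τ) ^ (-γ) : ℝ) • ((xt s : ℝ) : ℂ)) = ((Kr b γ xt τ : ℝ) : ℂ) := by
  rw [Kr, ← intervalIntegral.integral_ofReal]
  apply intervalIntegral.integral_congr
  intro s _
  simp [Complex.real_smul]

lemma left_transfer {a b γ : ℝ} {x xt : ℝ → ℝ}
    (hEq : Set.EqOn x xt (Icc a b)) {t : ℝ} (ht : t ∈ Set.Ioo a b)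
    (hd : DifferentiableAt ℝ (fun τ => ∫ s in a..τ, ((τ - s) ^ (-γ) : ℝ) • ((x s : ℝ) : ℂ)) t) :
    HasDerivAt (Kl a γ xt) (deriv (Kl a γ xt) t) t ∧
    deriv (fun τ => ∫ s in a..τ, ((τ - s) ^ (-γ) : ℝ) • ((x s : ℝ) : ℂ)) t
      = ((deriv (Kl a γ xt) t : ℝ) : ℂ) := by
  have hEv : (fun τ => ∫ s in a..τ, ((τ - s) ^ (-γ) : ℝ) • ((x s : ℝ) : ℂ))
      =ᶠ[nhds t] (fun τ => ((Kl a γ xt τ : ℝ) : ℂ)) := by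
    apply Filter.eventually_of_mem (Ioo_mem_nhds ht.1 ht.2)
    intro τ hτ
    show (∫ s in a..τ, ((τ - s) ^ (-γ) : ℝ) • ((x s : ℝ) : ℂ)) = ((Kl a γ xt τ : ℝ) : ℂ)
    rw [← ofReal_Kl xt τ]
    apply intervalIntegral.integral_congr
    intro s hs
    rw [Set.uIcc_of_le hτ.1.le] at hs
    show ((τ - s) ^ (-γ) : ℝ) • ((x s : ℝ) : ℂ) = ((τ - s) ^ (-γ) : ℝ) • ((xt s : ℝ) : ℂ)
    rw [hEq ⟨hs.1, le_trans hs.2 hτ.2.le⟩]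
  have hd2 : DifferentiableAt ℝ (fun τ => ((Kl a γ xt τ : ℝ) : ℂ)) t :=
    (hEv.differentiableAt_iff).mp hd
  have hd3 : DifferentiableAt ℝ (Kl a γ xt) t := by
    have h := (Complex.reCLM.differentiableAt).comp t hd2
    have he : (Complex.reCLM ∘ fun τ => ((Kl a γ xt τ : ℝ) : ℂ)) = Kl a γ xt := by
      funext τ; simp
    rwa [he] at h
  refine ⟨hd3.hasDerivAt, ?_⟩
  rw [hEv.deriv_eq]
  exact (hd3.hasDerivAt.ofReal_comp).deriv

lemma right_transfer {a b γ : ℝ} {x xt : ℝ → ℝ}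
    (hEq : Set.EqOn x xt (Icc a b)) {t : ℝ} (ht : t ∈ Set.Ioo a b)
    (hd : DifferentiableAt ℝ (fun τ => ∫ s in τ..b, ((s - τ) ^ (-γ) : ℝ) • ((x s : ℝ) : ℂ)) t) :
    HasDerivAt (Kr b γ xt) (deriv (Kr b γ xt) t) t ∧
    deriv (fun τ => ∫ s in τ..b, ((s - τ) ^ (-γ) : ℝ) • ((x s : ℝ) : ℂ)) t
      = ((deriv (Kr b γ xt) t : ℝ) : ℂ) := by
  have hEv : (fun τ => ∫ s in τ..b, ((s - τ) ^ (-γ) : ℝ) • ((x s : ℝ) : ℂ))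
      =ᶠ[nhds t] (fun τ => ((Kr b γ xt τ : ℝ) : ℂ)) := by
    apply Filter.eventually_of_mem (Ioo_mem_nhds ht.1 ht.2)
    intro τ hτ
    show (∫ s in τ..b, ((s - τ) ^ (-γ) : ℝ) • ((x s : ℝ) : ℂ)) = ((Kr b γ xt τ : ℝ) : ℂ)
    rw [← ofReal_Kr xt τ]
    apply intervalIntegral.integral_congr
    intro s hs
    rw [Set.uIcc_of_le hτ.2.le] at hs
    show ((s - τ) ^ (-γ) : ℝ) • ((x s : ℝ) : ℂ) = ((s - τ) ^ (-γ) : ℝ) • ((xt s : ℝ) : ℂ)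
    rw [hEq ⟨le_trans hτ.1.le hs.1, hs.2⟩]
  have hd2 : DifferentiableAt ℝ (fun τ => ((Kr b γ xt τ : ℝ) : ℂ)) t :=
    (hEv.differentiableAt_iff).mp hd
  have hd3 : DifferentiableAt ℝ (Kr b γ xt) t := by
    have h := (Complex.reCLM.differentiableAt).comp t hd2
    have he : (Complex.reCLM ∘ fun τ => ((Kr b γ xt τ : ℝ) : ℂ)) = Kr b γ xt := by
      funext τ; simp
    rwa [he] at h
  refine ⟨hd3.hasDerivAt, ?_⟩
  rw [hEv.deriv_eq]
  exact (hd3.hasDerivAt.ofReal_comp).deriv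

theorem stmt5 {a b : ℝ} (hab : a < b) {α β : ℝ}
    (hα : α ∈ Set.Ioo (0 : ℝ) 1) (hβ : β ∈ Set.Ioo (0 : ℝ) 1) (μ : ℂ)
    (f g : ℝ → ℝ)
    (hf : ContDiffOn ℝ 1 f (Set.Icc a b)) (hg : ContDiffOn ℝ 1 g (Set.Icc a b))
    (hfα : HasRLpair a b α α fun s => ((f s : ℝ) : ℂ))
    (hfβ : HasRLpair a b β β fun s => ((f s : ℝ) : ℂ))
    (hgα : HasRLpair a b α α fun s => ((g s : ℝ) : ℂ))
    (hgβ : HasRLpair a b β β fun s => ((g s : ℝ) : ℂ))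
    (hflαc : ContinuousOn (RLlC a α fun s => ((f s : ℝ) : ℂ)) (Set.Ioo a b))
    (hflβc : ContinuousOn (RLlC a β fun s => ((f s : ℝ) : ℂ)) (Set.Ioo a b))
    (hfrαc : ContinuousOn (RLrC b α fun s => ((f s : ℝ) : ℂ)) (Set.Ioo a b))
    (hfrβc : ContinuousOn (RLrC b β fun s => ((f s : ℝ) : ℂ)) (Set.Ioo a b))
    (hglαc : ContinuousOn (RLlC a α fun s => ((g s : ℝ) : ℂ)) (Set.Ioo a b))
    (hglβc : ContinuousOn (RLlC a β fun s => ((g s : ℝ) : ℂ)) (Set.Ioo a b))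
    (hgrαc : ContinuousOn (RLrC b α fun s => ((g s : ℝ) : ℂ)) (Set.Ioo a b))
    (hgrβc : ContinuousOn (RLrC b β fun s => ((g s : ℝ) : ℂ)) (Set.Ioo a b))
    (hint1 : IntervalIntegrable
      (fun t => Dfrac a b α β μ (fun s => ((f s : ℝ) : ℂ)) t * ((g t : ℝ) : ℂ)) volume a b)
    (hint2 : IntervalIntegrable
      (fun t => ((f t : ℝ) : ℂ) * Dfrac a b β α (-μ) (fun s => ((g s : ℝ) : ℂ)) t) volume a b)
    (hbc : (f a = 0 ∧ f b = 0) ∨ (g a = 0 ∧ g b = 0)) :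
    ∫ t in a..b, Dfrac a b α β μ (fun s => ((f s : ℝ) : ℂ)) t * ((g t : ℝ) : ℂ)
      = -∫ t in a..b, ((f t : ℝ) : ℂ) * Dfrac a b β α (-μ) (fun s => ((g s : ℝ) : ℂ)) t := by
  obtain ⟨hα0, hα1⟩ := hα
  obtain ⟨hβ0, hβ1⟩ := hβ
  -- clamp to [a,b]
  set cl : ℝ → ℝ := fun t => max a (min b t) with hcl
  have hclcont : Continuous cl := continuous_const.max (continuous_const.min continuous_id)
  have hclmem : ∀ t, cl t ∈ Set.Icc a b := by
    intro t
    exact ⟨le_max_left _ _, max_le hab.le (min_le_left _ _)⟩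
  have hclid : ∀ t ∈ Set.Icc a b, cl t = t := by
    intro t ht
    show max a (min b t) = t
    rw [min_eq_right ht.2, max_eq_right ht.1]
  set ft : ℝ → ℝ := fun t => f (cl t) with hftdef
  set gt : ℝ → ℝ := fun t => g (cl t) with hgtdef
  have hfEq : Set.EqOn f ft (Set.Icc a b) := fun t ht => by
    show f t = f (cl t); rw [hclid t ht]
  have hgEq : Set.EqOn g gt (Set.Icc a b) := fun t ht => by
    show g t = g (cl t); rw [hclid t ht]
  have hftc : Continuous ft := (hf.continuousOn).comp_continuous hclcont hclmem
  have hgtc : Continuous gt := (hg.continuousOn).comp_continuous hclcont hclmem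
  set fd : ℝ → ℝ := fun t => derivWithin f (Set.Icc a b) (cl t) with hfddef
  set gd : ℝ → ℝ := fun t => derivWithin g (Set.Icc a b) (cl t) with hgddef
  have hfdc : Continuous fd :=
    (hf.continuousOn_derivWithin (uniqueDiffOn_Icc hab) le_rfl).comp_continuous hclcont hclmem
  have hgdc : Continuous gd :=
    (hg.continuousOn_derivWithin (uniqueDiffOn_Icc hab) le_rfl).comp_continuous hclcont hclmem
  have hftd : ∀ t ∈ Set.Ioo a b, HasDerivAt ft (fd t) t := by
    intro t ht
    have hmem : Set.Icc a b ∈ nhds t := Icc_mem_nhds ht.1 ht.2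
    have h1 : DifferentiableAt ℝ f t := (hf.contDiffAt hmem).differentiableAt one_ne_zero
    have h3 : fd t = deriv f t := by
      show derivWithin f (Set.Icc a b) (cl t) = deriv f t
      rw [hclid t (Set.Ioo_subset_Icc_self ht), derivWithin_of_mem_nhds hmem]
    have h2 : HasDerivAt f (fd t) t := h3 ▸ h1.hasDerivAt
    apply h2.congr_of_eventuallyEq
    apply Filter.eventually_of_mem (Ioo_mem_nhds ht.1 ht.2)
    intro x hx
    exact (hfEq (Set.Ioo_subset_Icc_self hx)).symm
  have hgtd : ∀ t ∈ Set.Ioo a b, HasDerivAt gt (gd t) t := by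
    intro t ht
    have hmem : Set.Icc a b ∈ nhds t := Icc_mem_nhds ht.1 ht.2
    have h1 : DifferentiableAt ℝ g t := (hg.contDiffAt hmem).differentiableAt one_ne_zero
    have h3 : gd t = deriv g t := by
      show derivWithin g (Set.Icc a b) (cl t) = deriv g t
      rw [hclid t (Set.Ioo_subset_Icc_self ht), derivWithin_of_mem_nhds hmem]
    have h2 : HasDerivAt g (gd t) t := h3 ▸ h1.hasDerivAt
    apply h2.congr_of_eventuallyEq
    apply Filter.eventually_of_mem (Ioo_mem_nhds ht.1 ht.2)
    intro x hx
    exact (hgEq (Set.Ioo_subset_Icc_self hx)).symm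
  -- coefficients
  set z₁ : ℂ := (1 + Complex.I * μ) / 2 * (((Real.Gamma (1 - α))⁻¹ : ℝ) : ℂ) with hz₁
  set z₂ : ℂ := (1 - Complex.I * μ) / 2 * (((Real.Gamma (1 - β))⁻¹ : ℝ) : ℂ) with hz₂
  -- main functions
  set E : ℝ → ℂ := fun t => Dfrac a b α β μ (fun s => ((f s : ℝ) : ℂ)) t * ((g t : ℝ) : ℂ)
      + ((f t : ℝ) : ℂ) * Dfrac a b β α (-μ) (fun s => ((g s : ℝ) : ℂ)) t with hE
  set ρ : ℝ → ℂ := fun t => z₁ * ((Kl a α ft t * gd t + fd t * Kr b α gt t : ℝ) : ℂ)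
      + z₂ * ((Kl a β gt t * fd t + gd t * Kr b β ft t : ℝ) : ℂ) with hρ
  set Ψ : ℝ → ℂ := fun t => z₁ * ((Kl a α ft t * gt t + ft t * Kr b α gt t : ℝ) : ℂ)
      + z₂ * ((Kl a β gt t * ft t + gt t * Kr b β ft t : ℝ) : ℂ) with hΨ
  -- derivative of Ψ
  have hΨderiv : ∀ t ∈ Set.Ioo a b, HasDerivAt Ψ (E t + ρ t) t := by
    intro t ht
    have h1 := left_transfer hfEq ht (hfα.1 t ht)
    have h2 := right_transfer hgEq ht (hgα.2 t ht)
    have h3 := left_transfer hgEq ht (hgβ.1 t ht)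
    have h4 := right_transfer hfEq ht (hfβ.2 t ht)
    have hft' := hftd t ht
    have hgt' := hgtd t ht
    have k1 : HasDerivAt (fun t => Kl a α ft t * gt t + ft t * Kr b α gt t)
        (deriv (Kl a α ft) t * gt t + Kl a α ft t * gd t
          + (fd t * Kr b α gt t + ft t * deriv (Kr b α gt) t)) t :=
      (h1.1.mul hgt').add (hft'.mul h2.1)
    have k2 : HasDerivAt (fun t => Kl a β gt t * ft t + gt t * Kr b β ft t)
        (deriv (Kl a β gt) t * ft t + Kl a β gt t * fd t
          + (gd t * Kr b β ft t + gt t * deriv (Kr b β ft) t)) t :=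
      (h3.1.mul hft').add (hgt'.mul h4.1)
    have K : HasDerivAt Ψ
        (z₁ * ((deriv (Kl a α ft) t * gt t + Kl a α ft t * gd t
          + (fd t * Kr b α gt t + ft t * deriv (Kr b α gt) t) : ℝ) : ℂ)
          + z₂ * ((deriv (Kl a β gt) t * ft t + Kl a β gt t * fd t
          + (gd t * Kr b β ft t + gt t * deriv (Kr b β ft) t) : ℝ) : ℂ)) t :=
      ((k1.ofReal_comp).const_mul z₁).add ((k2.ofReal_comp).const_mul z₂)
    have hval : E t + ρ t
        = z₁ * ((deriv (Kl a α ft) t * gt t + Kl a α ft t * gd t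
          + (fd t * Kr b α gt t + ft t * deriv (Kr b α gt) t) : ℝ) : ℂ)
          + z₂ * ((deriv (Kl a β gt) t * ft t + Kl a β gt t * fd t
          + (gd t * Kr b β ft t + gt t * deriv (Kr b β ft) t) : ℝ) : ℂ) := by
      have hLa : RLlC a α (fun s => ((f s : ℝ) : ℂ)) t
          = (((Real.Gamma (1 - α))⁻¹ : ℝ) : ℂ) * ((deriv (Kl a α ft) t : ℝ) : ℂ) := by
        rw [RLlC, h1.2, Complex.real_smul]
      have hRa : RLrC b α (fun s => ((g s : ℝ) : ℂ)) t
          = -((((Real.Gamma (1 - α))⁻¹ : ℝ) : ℂ) * ((deriv (Kr b α gt) t : ℝ) : ℂ)) := by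
        rw [RLrC, h2.2, Complex.real_smul]
      have hLb : RLlC a β (fun s => ((g s : ℝ) : ℂ)) t
          = (((Real.Gamma (1 - β))⁻¹ : ℝ) : ℂ) * ((deriv (Kl a β gt) t : ℝ) : ℂ) := by
        rw [RLlC, h3.2, Complex.real_smul]
      have hRb : RLrC b β (fun s => ((f s : ℝ) : ℂ)) t
          = -((((Real.Gamma (1 - β))⁻¹ : ℝ) : ℂ) * ((deriv (Kr b β ft) t : ℝ) : ℂ)) := by
        rw [RLrC, h4.2, Complex.real_smul]
      have hfg1 : f t = ft t := hfEq (Set.Ioo_subset_Icc_self ht)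
      have hfg2 : g t = gt t := hgEq (Set.Ioo_subset_Icc_self ht)
      rw [hE, hρ, hz₁, hz₂]
      show (Dfrac a b α β μ (fun s => ((f s : ℝ) : ℂ)) t * ((g t : ℝ) : ℂ)
        + ((f t : ℝ) : ℂ) * Dfrac a b β α (-μ) (fun s => ((g s : ℝ) : ℂ)) t) + _ = _
      rw [Dfrac, Dfrac, hLa, hRa, hLb, hRb, hfg1, hfg2]
      push_cast
      ring
    rw [hval]
    exact K
  -- continuity of Ψ and ρ on [a,b]
  have hKlα : ContinuousOn (Kl a α ft) (Set.Icc a b) := Kl_cont hα0 hα1 hftc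
  have hKrα : ContinuousOn (Kr b α gt) (Set.Icc a b) := Kr_cont hα0 hα1 hgtc
  have hKlβ : ContinuousOn (Kl a β gt) (Set.Icc a b) := Kl_cont hβ0 hβ1 hgtc
  have hKrβ : ContinuousOn (Kr b β ft) (Set.Icc a b) := Kr_cont hβ0 hβ1 hftc
  have hΨcont : ContinuousOn Ψ (Set.Icc a b) := by
    apply ContinuousOn.add
    · exact continuousOn_const.mul (Complex.continuous_ofReal.comp_continuousOn
        ((hKlα.mul hgtc.continuousOn).add (hftc.continuousOn.mul hKrα)))
    · exact continuousOn_const.mul (Complex.continuous_ofReal.comp_continuousOn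
        ((hKlβ.mul hftc.continuousOn).add (hgtc.continuousOn.mul hKrβ)))
  have hρcont : ContinuousOn ρ (Set.Icc a b) := by
    apply ContinuousOn.add
    · exact continuousOn_const.mul (Complex.continuous_ofReal.comp_continuousOn
        ((hKlα.mul hgdc.continuousOn).add (hfdc.continuousOn.mul hKrα)))
    · exact continuousOn_const.mul (Complex.continuous_ofReal.comp_continuousOn
        ((hKlβ.mul hfdc.continuousOn).add (hgdc.continuousOn.mul hKrβ)))
  have hρint : IntervalIntegrable ρ volume a b := by
    apply ContinuousOn.intervalIntegrable
    rwa [Set.uIcc_of_le hab.le]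
  have hEint : IntervalIntegrable E volume a b := hint1.add hint2
  have hFTC : ∫ t in a..b, (E t + ρ t) = Ψ b - Ψ a :=
    intervalIntegral.integral_eq_sub_of_hasDerivAt_of_le hab.le hΨcont hΨderiv
      (hEint.add hρint)
  have hEρ : ∫ t in a..b, (E t + ρ t) = (∫ t in a..b, E t) + ∫ t in a..b, ρ t :=
    intervalIntegral.integral_add hEint hρint
  -- evaluate ∫ ρ
  have hρ1int : IntervalIntegrable
      (fun t => z₁ * ((Kl a α ft t * gd t + fd t * Kr b α gt t : ℝ) : ℂ)) volume a b := by
    apply ContinuousOn.intervalIntegrable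
    rw [Set.uIcc_of_le hab.le]
    exact continuousOn_const.mul (Complex.continuous_ofReal.comp_continuousOn
      ((hKlα.mul hgdc.continuousOn).add (hfdc.continuousOn.mul hKrα)))
  have hρ2int : IntervalIntegrable
      (fun t => z₂ * ((Kl a β gt t * fd t + gd t * Kr b β ft t : ℝ) : ℂ)) volume a b := by
    apply ContinuousOn.intervalIntegrable
    rw [Set.uIcc_of_le hab.le]
    exact continuousOn_const.mul (Complex.continuous_ofReal.comp_continuousOn
      ((hKlβ.mul hfdc.continuousOn).add (hgdc.continuousOn.mul hKrβ)))
  have hρval : ∫ t in a..b, ρ t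
      = z₁ * ((gt b * Kl a α ft b - ft a * Kr b α gt a : ℝ) : ℂ)
        + z₂ * ((ft b * Kl a β gt b - gt a * Kr b β ft a : ℝ) : ℂ) := by
    rw [hρ]
    rw [intervalIntegral.integral_add hρ1int hρ2int,
      intervalIntegral.integral_const_mul, intervalIntegral.integral_const_mul,
      intervalIntegral.integral_ofReal, intervalIntegral.integral_ofReal]
    rw [partC hab hα0 hα1 hftc hgtc hfdc hgdc hftd hgtd,
      partC hab hβ0 hβ1 hgtc hftc hgdc hfdc hgtd hftd]
  -- boundary values
  have hKla0 : Kl a α ft a = 0 := intervalIntegral.integral_same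
  have hKlb0 : Kl a β gt a = 0 := intervalIntegral.integral_same
  have hKra0 : Kr b α gt b = 0 := intervalIntegral.integral_same
  have hKrb0 : Kr b β ft b = 0 := intervalIntegral.integral_same
  have hE0 : (∫ t in a..b, E t) = 0 := by
    have := hFTC
    rw [hEρ, hρval] at this
    rw [hΨ] at this
    simp only [hKla0, hKlb0, hKra0, hKrb0] at this
    have h2 : (∫ t in a..b, E t)
        = (z₁ * ((Kl a α ft b * gt b + ft b * 0 : ℝ) : ℂ)
            + z₂ * ((Kl a β gt b * ft b + gt b * 0 : ℝ) : ℂ))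
          - (z₁ * (((0:ℝ) * gt a + ft a * Kr b α gt a : ℝ) : ℂ)
            + z₂ * (((0:ℝ) * ft a + gt a * Kr b β ft a : ℝ) : ℂ))
          - (z₁ * ((gt b * Kl a α ft b - ft a * Kr b α gt a : ℝ) : ℂ)
            + z₂ * ((ft b * Kl a β gt b - gt a * Kr b β ft a : ℝ) : ℂ)) := by
      linear_combination this
    rw [h2]
    push_cast
    ring
  -- conclude
  have hsum : (∫ t in a..b, Dfrac a b α β μ (fun s => ((f s : ℝ) : ℂ)) t * ((g t : ℝ) : ℂ))
      + (∫ t in a..b, ((f t : ℝ) : ℂ) * Dfrac a b β α (-μ) (fun s => ((g s : ℝ) : ℂ)) t)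
      = 0 := by
    rw [← intervalIntegral.integral_add hint1 hint2]
    exact hE0
  exact eq_neg_of_add_eq_zero_left hsum
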